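/- Let u = χ_{H_θ} where H_θ = {z : ⟨z − z_0, e_θ⟩ ≤ 0} is a half-plane through a point z_0 in the central cell of a 3×3 grid of unit cells, with inner normal e_θ = (−sin θ, cos θ). Define the Sobel responses H_T = 2a_{1,0} + a_{1,1} + a_{1,−1} − 2a_{−1,0} − a_{−1,1} − a_{−1,−1} and V_T = 2a_{0,1} + a_{1,1} + a_{−1,1} − 2a_{0,−1} − a_{1,−1} − a_{−1,−1}, where a_{i,j} are the cell averages of u. Then V_T > 0 if and only if θ ∈ (π/2, 3π/2), and V_T < 0 if and only if θ ∈ [0, π/2) ∪ (3π/2, 2π). -/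
import Mathlib


open MeasureTheory

/-- The unit cell `T_{i,j}` of a 3×3 grid of unit squares centered at the origin. -/
def unitCell (i j : ℤ) : Set (ℝ × ℝ) :=
  Set.Icc ((i : ℝ) - 1 / 2) ((i : ℝ) + 1 / 2) ×ˢ Set.Icc ((j : ℝ) - 1 / 2) ((j : ℝ) + 1 / 2)

section Aux

open Set

noncomputable def clamp01 (t : ℝ) : ℝ := max 0 (min 1 t)

lemma clamp01_mono : Monotone clamp01 := fun _ _ h =>
  max_le_max le_rfl (min_le_min le_rfl h)

lemma clamp01_continuous : Continuous clamp01 :=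
  continuous_const.max (continuous_const.min continuous_id)

lemma clamp01_nonneg (t : ℝ) : 0 ≤ clamp01 t := le_max_left _ _

lemma ofReal_max_zero (r : ℝ) : ENNReal.ofReal (max 0 r) = ENNReal.ofReal r := by
  rcases le_total r 0 with h | h
  · rw [max_eq_left h, ENNReal.ofReal_of_nonpos h, ENNReal.ofReal_zero]
  · rw [max_eq_right h]

lemma volIic (t lo : ℝ) :
    volume (Iic t ∩ Icc lo (lo + 1)) = ENNReal.ofReal (clamp01 (t - lo)) := by
  have h : Iic t ∩ Icc lo (lo + 1) = Icc lo (min (lo + 1) t) := by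
    ext y; simp [le_min_iff]; tauto
  rw [h, Real.volume_Icc, clamp01, ofReal_max_zero]
  congr 1
  rcases le_total (lo + 1) t with h' | h'
  · rw [min_eq_left h', min_eq_left (by linarith : (1:ℝ) ≤ t - lo)]; ring
  · rw [min_eq_right h', min_eq_right (by linarith : t - lo ≤ 1)]

lemma volIci (t lo : ℝ) :
    volume (Ici t ∩ Icc lo (lo + 1)) = ENNReal.ofReal (clamp01 (lo + 1 - t)) := by
  have h : Ici t ∩ Icc lo (lo + 1) = Icc (max lo t) (lo + 1) := by
    ext y; simp [max_le_iff]; tauto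
  rw [h, Real.volume_Icc, clamp01, ofReal_max_zero]
  congr 1
  rcases le_total t lo with h' | h'
  · rw [max_eq_left h', min_eq_left (by linarith : (1:ℝ) ≤ lo + 1 - t)]; ring
  · rw [max_eq_right h', min_eq_right (by linarith : lo + 1 - t ≤ 1)]

lemma slice_iff_pos (c s x0 y0 x y : ℝ) (hc : 0 < c) :
    ((x - x0) * (-s) + (y - y0) * c ≤ 0) ↔ y ≤ y0 + s * (x - x0) / c := by
  rw [show (x - x0) * (-s) + (y - y0) * c = (y - y0) * c - s * (x - x0) by ring,
    sub_nonpos, ← le_div_iff₀ hc, sub_le_iff_le_add']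

lemma slice_iff_neg (c s x0 y0 x y : ℝ) (hc : c < 0) :
    ((x - x0) * (-s) + (y - y0) * c ≤ 0) ↔ y0 + s * (x - x0) / c ≤ y := by
  rw [show (x - x0) * (-s) + (y - y0) * c = (y - y0) * c - s * (x - x0) by ring,
    sub_nonpos, ← div_le_iff_of_neg hc, le_sub_iff_add_le']

lemma measurable_H (c s x0 y0 : ℝ) :
    MeasurableSet {z : ℝ × ℝ | (z.1 - x0) * (-s) + (z.2 - y0) * c ≤ 0} := by
  apply measurableSet_le _ measurable_const
  fun_prop

lemma cellVol_core (c s x0 y0 : ℝ) (i j : ℤ) (f : ℝ → ℝ) (hf : Continuous f)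
    (hslice : ∀ x, volume ({y : ℝ | (x - x0) * (-s) + (y - y0) * c ≤ 0} ∩
        Icc ((j : ℝ) - 1 / 2) ((j : ℝ) + 1 / 2)) = ENNReal.ofReal (clamp01 (f x)))
    (hnn : ∀ x, 0 ≤ clamp01 (f x)) :
    (volume ({z : ℝ × ℝ | (z.1 - x0) * (-s) + (z.2 - y0) * c ≤ 0} ∩ unitCell i j)).toReal
      = ∫ x in Icc ((i : ℝ) - 1 / 2) ((i : ℝ) + 1 / 2), clamp01 (f x) := by
  set H := {z : ℝ × ℝ | (z.1 - x0) * (-s) + (z.2 - y0) * c ≤ 0} with hHdef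
  have hmH : MeasurableSet H := measurable_H c s x0 y0
  have hmC : MeasurableSet (unitCell i j) := measurableSet_Icc.prod measurableSet_Icc
  rw [Measure.volume_eq_prod, Measure.prod_apply (hmH.inter hmC)]
  have hpre : ∀ x : ℝ, volume (Prod.mk x ⁻¹' (H ∩ unitCell i j)) =
      (Icc ((i : ℝ) - 1 / 2) ((i : ℝ) + 1 / 2)).indicator
        (fun x => ENNReal.ofReal (clamp01 (f x))) x := by
    intro x
    by_cases hx : x ∈ Icc ((i : ℝ) - 1 / 2) ((i : ℝ) + 1 / 2)
    · rw [indicator_of_mem hx]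
      have : Prod.mk x ⁻¹' (H ∩ unitCell i j) =
          {y : ℝ | (x - x0) * (-s) + (y - y0) * c ≤ 0} ∩
            Icc ((j : ℝ) - 1 / 2) ((j : ℝ) + 1 / 2) := by
        ext y
        simp only [mem_preimage, mem_inter_iff, mem_setOf_eq, unitCell, Set.mem_prod,
          hHdef]
        exact ⟨fun ⟨h1, _, h2⟩ => ⟨h1, h2⟩, fun ⟨h1, h2⟩ => ⟨h1, hx, h2⟩⟩
      rw [this, hslice]
    · rw [indicator_of_notMem hx]
      have : Prod.mk x ⁻¹' (H ∩ unitCell i j) = ∅ := by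
        ext y
        simp only [mem_preimage, mem_inter_iff, mem_empty_iff_false, iff_false, not_and]
        intro _ hy
        exact absurd ⟨hy.1.1, hy.1.2⟩ hx
      rw [this, measure_empty]
  rw [lintegral_congr hpre, lintegral_indicator measurableSet_Icc _]
  have hInt : IntegrableOn (fun x => clamp01 (f x)) (Icc ((i : ℝ) - 1 / 2) ((i : ℝ) + 1 / 2)) :=
    (clamp01_continuous.comp hf).integrableOn_Icc
  rw [← ofReal_integral_eq_lintegral_ofReal hInt (Filter.Eventually.of_forall hnn)]
  exact ENNReal.toReal_ofReal (setIntegral_nonneg measurableSet_Icc fun x _ => hnn x)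

lemma cellVol_pos (c s x0 y0 : ℝ) (hc : 0 < c) (i j : ℤ) :
    (volume ({z : ℝ × ℝ | (z.1 - x0) * (-s) + (z.2 - y0) * c ≤ 0} ∩ unitCell i j)).toReal
      = ∫ x in Icc ((i : ℝ) - 1 / 2) ((i : ℝ) + 1 / 2),
          clamp01 (y0 + s * (x - x0) / c - ((j : ℝ) - 1 / 2)) := by
  apply cellVol_core
  · fun_prop
  · intro x
    have h1 : {y : ℝ | (x - x0) * (-s) + (y - y0) * c ≤ 0} = Iic (y0 + s * (x - x0) / c) := by
      ext y; exact slice_iff_pos c s x0 y0 x y hc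
    have h2 : ((j : ℝ) + 1 / 2) = ((j : ℝ) - 1 / 2) + 1 := by ring
    rw [h1, h2, volIic]
  · intro x; exact clamp01_nonneg _

lemma cellVol_neg (c s x0 y0 : ℝ) (hc : c < 0) (i j : ℤ) :
    (volume ({z : ℝ × ℝ | (z.1 - x0) * (-s) + (z.2 - y0) * c ≤ 0} ∩ unitCell i j)).toReal
      = ∫ x in Icc ((i : ℝ) - 1 / 2) ((i : ℝ) + 1 / 2),
          clamp01 (((j : ℝ) - 1 / 2) + 1 - (y0 + s * (x - x0) / c)) := by
  apply cellVol_core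
  · fun_prop
  · intro x
    have h1 : {y : ℝ | (x - x0) * (-s) + (y - y0) * c ≤ 0} = Ici (y0 + s * (x - x0) / c) := by
      ext y; exact slice_iff_neg c s x0 y0 x y hc
    have h2 : ((j : ℝ) + 1 / 2) = ((j : ℝ) - 1 / 2) + 1 := by ring
    rw [h1, h2, volIci]
  · intro x; exact clamp01_nonneg _

lemma colDiff_nonneg (g : ℝ → ℝ) (hg : Continuous g) (A B : ℝ) :
    ∫ x in Icc A B, clamp01 (g x - 1 / 2) ≤ ∫ x in Icc A B, clamp01 (g x + 3 / 2) := by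
  apply setIntegral_mono_on
  · exact (clamp01_continuous.comp (by fun_prop)).integrableOn_Icc
  · exact (clamp01_continuous.comp (by fun_prop)).integrableOn_Icc
  · exact measurableSet_Icc
  · intro x _
    exact clamp01_mono (by linarith)

lemma colDiff_strict (g : ℝ → ℝ) (hg : Continuous g) (A B x1 : ℝ) (hAB : A < B)
    (hx1 : x1 ∈ Icc A B) (hg1 : g x1 ∈ Icc (-(1 / 2) : ℝ) (1 / 2)) :
    ∫ x in Icc A B, clamp01 (g x - 1 / 2) < ∫ x in Icc A B, clamp01 (g x + 3 / 2) := by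
  set h : ℝ → ℝ := fun x => clamp01 (g x + 3 / 2) - clamp01 (g x - 1 / 2) with hh
  have hhc : Continuous h := by
    apply Continuous.sub <;> exact clamp01_continuous.comp (by fun_prop)
  have hnn : ∀ x, 0 ≤ h x := fun x => sub_nonneg.2 (clamp01_mono (by linarith))
  have hx1v : h x1 = 1 := by
    have h1 : clamp01 (g x1 + 3 / 2) = 1 := by
      rw [clamp01, min_eq_left (by linarith [hg1.1]), max_eq_right zero_le_one]
    have h2 : clamp01 (g x1 - 1 / 2) = 0 := by
      rw [clamp01, max_eq_left (le_trans (min_le_right _ _) (by linarith [hg1.2]))]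
    show clamp01 (g x1 + 3 / 2) - clamp01 (g x1 - 1 / 2) = 1
    rw [h1, h2]; norm_num
  have hev : ∀ᶠ x in nhds x1, 1 / 2 < h x :=
    (hhc.continuousAt (x := x1)).eventually_const_lt (by rw [hx1v]; norm_num)
  obtain ⟨δ, hδ, hball⟩ := Metric.eventually_nhds_iff_ball.1 hev
  set α := max A (x1 - δ) with hα
  set β := min B (x1 + δ) with hβ
  have hαβ : α < β := by
    apply max_lt <;> apply lt_min
    · exact hAB
    · linarith [hx1.1]
    · linarith [hx1.2]
    · linarith
  have hposOn : ∀ x ∈ Ioo α β, 0 < h x := by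
    intro x hx
    refine lt_trans (by norm_num) (hball x ?_)
    rw [Real.ball_eq_Ioo]
    constructor
    · exact lt_of_le_of_lt (le_max_right A (x1 - δ)) hx.1
    · exact lt_of_lt_of_le hx.2 (min_le_right B (x1 + δ))
  have key : 0 < ∫ x in Icc α β, h x := by
    rw [integral_Icc_eq_integral_Ioc, ← intervalIntegral.integral_of_le hαβ.le]
    exact intervalIntegral.intervalIntegral_pos_of_pos_on
      (hhc.intervalIntegrable _ _) hposOn hαβ
  have hsub : Icc α β ⊆ Icc A B :=
    Icc_subset_Icc (le_max_left _ _) (min_le_left _ _)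
  have mono : ∫ x in Icc α β, h x ≤ ∫ x in Icc A B, h x :=
    setIntegral_mono_set hhc.integrableOn_Icc
      (Filter.Eventually.of_forall hnn) (HasSubset.Subset.eventuallyLE hsub)
  have hpos : 0 < ∫ x in Icc A B, h x := lt_of_lt_of_le key mono
  have heq : ∫ x in Icc A B, h x =
      (∫ x in Icc A B, clamp01 (g x + 3 / 2)) - ∫ x in Icc A B, clamp01 (g x - 1 / 2) :=
    integral_sub ((clamp01_continuous.comp (by fun_prop)).integrableOn_Icc)
      ((clamp01_continuous.comp (by fun_prop)).integrableOn_Icc)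
  linarith

lemma cos_neg_of_mid {θ : ℝ} (h : θ ∈ Set.Ioo (Real.pi / 2) (3 * Real.pi / 2)) :
    Real.cos θ < 0 :=
  Real.cos_neg_of_pi_div_two_lt_of_lt h.1 (by linarith [h.2])

lemma cos_pos_of_out {θ : ℝ}
    (h : θ ∈ Set.Ico 0 (Real.pi / 2) ∪ Set.Ioo (3 * Real.pi / 2) (2 * Real.pi)) :
    0 < Real.cos θ := by
  rcases h with h | h
  · exact Real.cos_pos_of_mem_Ioo ⟨by linarith [Real.pi_pos, h.1], h.2⟩
  · rw [← Real.cos_sub_two_pi]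
    exact Real.cos_pos_of_mem_Ioo ⟨by linarith [h.1], by linarith [Real.pi_pos, h.2]⟩

lemma mid_of_cos_neg {θ : ℝ} (hθ : θ ∈ Set.Ico 0 (2 * Real.pi)) (hc : Real.cos θ < 0) :
    θ ∈ Set.Ioo (Real.pi / 2) (3 * Real.pi / 2) := by
  by_contra hmem
  rw [Set.mem_Ioo, not_and_or, not_lt, not_lt] at hmem
  rcases hmem with h | h
  · have : 0 ≤ Real.cos θ :=
      Real.cos_nonneg_of_mem_Icc ⟨by linarith [hθ.1, Real.pi_pos], h⟩
    linarith
  · have : 0 ≤ Real.cos θ := by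
      rw [← Real.cos_sub_two_pi]
      exact Real.cos_nonneg_of_mem_Icc ⟨by linarith, by linarith [hθ.2, Real.pi_pos]⟩
    linarith

lemma out_of_cos_pos {θ : ℝ} (hθ : θ ∈ Set.Ico 0 (2 * Real.pi)) (hc : 0 < Real.cos θ) :
    θ ∈ Set.Ico 0 (Real.pi / 2) ∪ Set.Ioo (3 * Real.pi / 2) (2 * Real.pi) := by
  by_contra hmem
  rw [Set.mem_union, not_or, Set.mem_Ico, Set.mem_Ioo, not_and_or, not_and_or,
    not_lt, not_lt, not_le, not_lt] at hmem
  obtain ⟨h1, h2⟩ := hmem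
  have hl : Real.pi / 2 ≤ θ := by
    rcases h1 with h | h
    · linarith [hθ.1]
    · exact h
  have hr : θ ≤ Real.pi + Real.pi / 2 := by
    rcases h2 with h | h
    · linarith
    · linarith [hθ.2]
  have := Real.cos_nonpos_of_pi_div_two_le_of_le hl (by linarith)
  linarith

end Aux

/-- Sign of the vertical Sobel response for a half-plane interface through the central cell:
for `u = χ_{H_θ}` with `H_θ = {⟨z − z₀, e_θ⟩ ≤ 0}`, `e_θ = (−sin θ, cos θ)`, `z₀` in the
central unit cell, the Sobel response `V_T` satisfies `V_T > 0 ↔ θ ∈ (π/2, 3π/2)` and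
`V_T < 0 ↔ θ ∈ [0, π/2) ∪ (3π/2, 2π)`. -/
theorem stmt17 (z0 : ℝ × ℝ) (hz0 : z0 ∈ unitCell 0 0)
    (θ : ℝ) (hθ : θ ∈ Set.Ico 0 (2 * Real.pi)) :
    let H : Set (ℝ × ℝ) :=
      {z : ℝ × ℝ | (z.1 - z0.1) * (-Real.sin θ) + (z.2 - z0.2) * Real.cos θ ≤ 0}
    let a : ℤ → ℤ → ℝ := fun i j => (volume (H ∩ unitCell i j)).toReal
    let V : ℝ := 2 * a 0 1 + a 1 1 + a (-1) 1 - 2 * a 0 (-1) - a 1 (-1) - a (-1) (-1)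
    (0 < V ↔ θ ∈ Set.Ioo (Real.pi / 2) (3 * Real.pi / 2)) ∧
    (V < 0 ↔ θ ∈ Set.Ico 0 (Real.pi / 2) ∪ Set.Ioo (3 * Real.pi / 2) (2 * Real.pi)) := by
  intro H a V
  have hH : H = {z : ℝ × ℝ | (z.1 - z0.1) * (-Real.sin θ) + (z.2 - z0.2) * Real.cos θ ≤ 0} :=
    rfl
  have ha : ∀ i j : ℤ, a i j = (volume (H ∩ unitCell i j)).toReal := fun _ _ => rfl
  have hV : V = 2 * a 0 1 + a 1 1 + a (-1) 1 - 2 * a 0 (-1) - a 1 (-1) - a (-1) (-1) := rfl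
  simp only [unitCell, Set.mem_prod, Set.mem_Icc, Int.cast_zero] at hz0
  obtain ⟨⟨hx1, hx2⟩, hy1, hy2⟩ := hz0
  rcases lt_trichotomy (Real.cos θ) 0 with hc | hc | hc
  · -- cos θ < 0 : V > 0
    set G : ℝ → ℝ := fun x => -(z0.2 + Real.sin θ * (x - z0.1) / Real.cos θ) with hG
    have hGc : Continuous G := by fun_prop
    have hA1 : ∀ i : ℤ, a i 1 =
        ∫ x in Set.Icc ((i : ℝ) - 1 / 2) ((i : ℝ) + 1 / 2), clamp01 (G x + 3 / 2) := by
      intro i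
      rw [ha, hH, cellVol_neg _ _ _ _ hc i 1]
      refine setIntegral_congr_fun measurableSet_Icc fun x _ => ?_
      congr 1
      simp only [hG]
      push_cast
      ring
    have hAm1 : ∀ i : ℤ, a i (-1) =
        ∫ x in Set.Icc ((i : ℝ) - 1 / 2) ((i : ℝ) + 1 / 2), clamp01 (G x - 1 / 2) := by
      intro i
      rw [ha, hH, cellVol_neg _ _ _ _ hc i (-1)]
      refine setIntegral_congr_fun measurableSet_Icc fun x _ => ?_
      congr 1
      simp only [hG]
      push_cast
      ring
    have hGz : G z0.1 = -z0.2 := by simp [hG]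
    have d0 : ∫ x in Set.Icc (((0 : ℤ) : ℝ) - 1 / 2) (((0 : ℤ) : ℝ) + 1 / 2),
        clamp01 (G x - 1 / 2) < ∫ x in Set.Icc (((0 : ℤ) : ℝ) - 1 / 2) (((0 : ℤ) : ℝ) + 1 / 2),
        clamp01 (G x + 3 / 2) := by
      refine colDiff_strict G hGc _ _ z0.1 (by norm_num) ?_ ?_
      · constructor <;> push_cast <;> linarith
      · rw [Set.mem_Icc, hGz]
        constructor <;> linarith
    have d1 := colDiff_nonneg G hGc (((1 : ℤ) : ℝ) - 1 / 2) (((1 : ℤ) : ℝ) + 1 / 2)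
    have dm1 := colDiff_nonneg G hGc (((-1 : ℤ) : ℝ) - 1 / 2) (((-1 : ℤ) : ℝ) + 1 / 2)
    have hVpos : 0 < V := by
      rw [hV, hA1 0, hA1 1, hA1 (-1), hAm1 0, hAm1 1, hAm1 (-1)]
      linarith
    exact ⟨iff_of_true hVpos (mid_of_cos_neg hθ hc),
      iff_of_false (by linarith) fun hQ => absurd (cos_pos_of_out hQ) (by linarith)⟩
  · -- cos θ = 0 : V = 0
    have hsplit : ∀ i j : ℤ, H ∩ unitCell i j =
        ({x : ℝ | (x - z0.1) * (-Real.sin θ) ≤ 0} ∩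
          Set.Icc ((i : ℝ) - 1 / 2) ((i : ℝ) + 1 / 2)) ×ˢ
          Set.Icc ((j : ℝ) - 1 / 2) ((j : ℝ) + 1 / 2) := by
      intro i j
      rw [hH]
      ext z
      simp only [Set.mem_inter_iff, Set.mem_setOf_eq, unitCell, Set.mem_prod, hc,
        mul_zero, add_zero]
      tauto
    have haeq : ∀ i : ℤ, a i 1 = a i (-1) := by
      intro i
      rw [ha, ha, hsplit i 1, hsplit i (-1), Measure.volume_eq_prod,
        Measure.prod_prod, Measure.prod_prod, Real.volume_Icc, Real.volume_Icc]
      norm_num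
    have hV0 : V = 0 := by
      rw [hV, haeq 0, haeq 1, haeq (-1)]; ring
    refine ⟨iff_of_false (by rw [hV0]; exact lt_irrefl 0) ?_,
      iff_of_false (by rw [hV0]; exact lt_irrefl 0) ?_⟩
    · intro hP
      exact absurd (cos_neg_of_mid hP) (by linarith)
    · intro hQ
      exact absurd (cos_pos_of_out hQ) (by linarith)
  · -- cos θ > 0 : V < 0
    set G : ℝ → ℝ := fun x => z0.2 + Real.sin θ * (x - z0.1) / Real.cos θ with hG
    have hGc : Continuous G := by fun_prop
    have hA1 : ∀ i : ℤ, a i 1 =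
        ∫ x in Set.Icc ((i : ℝ) - 1 / 2) ((i : ℝ) + 1 / 2), clamp01 (G x - 1 / 2) := by
      intro i
      rw [ha, hH, cellVol_pos _ _ _ _ hc i 1]
      refine setIntegral_congr_fun measurableSet_Icc fun x _ => ?_
      congr 1
      simp only [hG]
      push_cast
      ring
    have hAm1 : ∀ i : ℤ, a i (-1) =
        ∫ x in Set.Icc ((i : ℝ) - 1 / 2) ((i : ℝ) + 1 / 2), clamp01 (G x + 3 / 2) := by
      intro i
      rw [ha, hH, cellVol_pos _ _ _ _ hc i (-1)]
      refine setIntegral_congr_fun measurableSet_Icc fun x _ => ?_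
      congr 1
      simp only [hG]
      push_cast
      ring
    have hGz : G z0.1 = z0.2 := by simp [hG]
    have d0 : ∫ x in Set.Icc (((0 : ℤ) : ℝ) - 1 / 2) (((0 : ℤ) : ℝ) + 1 / 2),
        clamp01 (G x - 1 / 2) < ∫ x in Set.Icc (((0 : ℤ) : ℝ) - 1 / 2) (((0 : ℤ) : ℝ) + 1 / 2),
        clamp01 (G x + 3 / 2) := by
      refine colDiff_strict G hGc _ _ z0.1 (by norm_num) ?_ ?_
      · constructor <;> push_cast <;> linarith
      · rw [Set.mem_Icc, hGz]
        constructor <;> linarith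
    have d1 := colDiff_nonneg G hGc (((1 : ℤ) : ℝ) - 1 / 2) (((1 : ℤ) : ℝ) + 1 / 2)
    have dm1 := colDiff_nonneg G hGc (((-1 : ℤ) : ℝ) - 1 / 2) (((-1 : ℤ) : ℝ) + 1 / 2)
    have hVneg : V < 0 := by
      rw [hV, hA1 0, hA1 1, hA1 (-1), hAm1 0, hAm1 1, hAm1 (-1)]
      linarith
    exact ⟨iff_of_false (by linarith) fun hP => absurd (cos_neg_of_mid hP) (by linarith),
      iff_of_true hVneg (out_of_cos_pos hθ hc)⟩
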